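/- Let Φ : ℂⁿ → ℝ be a strictly plurisubharmonic quadratic form and let u : ℂⁿ → ℂ be entire. Then: (i) u ∈ H^s_Φ(ℂⁿ) for every s ∈ ℝ if and only if for every N ∈ ℝ there exists C > 0 such that |u(z)| ≤ C ⟨z⟩^{N} e^{Φ(z)} for all z ∈ ℂⁿ; (ii) u ∈ H^s_Φ(ℂⁿ) for some s ∈ ℝ if and only if there exist N ∈ ℝ and C > 0 such that |u(z)| ≤ C ⟨z⟩^{N} e^{Φ(z)} for all z ∈ ℂⁿ. -/

import Mathlib

open Matrix MeasureTheory ENNReal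

noncomputable section

/-- The squared Euclidean norm `|z|²` on `ℂⁿ`. -/
def eSq {n : ℕ} (z : Fin n → ℂ) : ℝ := ∑ i, Complex.normSq (z i)

/-- The Japanese bracket `⟨z⟩ = (1 + |z|²)^{1/2}`. -/
def jb {n : ℕ} (z : Fin n → ℂ) : ℝ := Real.sqrt (1 + eSq z)

/-- `Φ : ℂⁿ → ℝ` is a (real) quadratic form of the underlying real coordinates. -/
def IsRQuad {n : ℕ} (Φ : (Fin n → ℂ) → ℝ) : Prop :=
  ∃ B : (Fin n → ℂ) →ₗ[ℝ] (Fin n → ℂ) →ₗ[ℝ] ℝ, ∀ z, Φ z = B z z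

/-- `Φ : ℂⁿ → ℝ` is a strictly plurisubharmonic quadratic form.  For a quadratic form `Φ`,
the Levi form satisfies `(∂²_{z z̄}Φ) w ⋅ w̄ = (Φ(w) + Φ(i w))/2`, so positive definiteness of
the Levi matrix is equivalent to `Φ(w) + Φ(i·w) > 0` for all `w ≠ 0`. -/
def IsSPSH {n : ℕ} (Φ : (Fin n → ℂ) → ℝ) : Prop :=
  IsRQuad Φ ∧ ∀ z : Fin n → ℂ, z ≠ 0 → 0 < Φ z + Φ (Complex.I • z)

/-- The squared weighted norm `‖u‖_s² = ∫ |u(z)|² ⟨z⟩^{2s} e^{-2Φ(z)} L(dz)` (in `ℝ≥0∞`). -/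
def hnorm {n : ℕ} (Φ : (Fin n → ℂ) → ℝ) (s : ℝ) (u : (Fin n → ℂ) → ℂ) : ℝ≥0∞ :=
  ∫⁻ z : Fin n → ℂ, (‖u z‖₊ : ℝ≥0∞) ^ 2 * ENNReal.ofReal (jb z ^ (2 * s) * Real.exp (-2 * Φ z))

/-- A conic subset of `ℂⁿ`. -/
def IsConic {n : ℕ} (V : Set (Fin n → ℂ)) : Prop := ∀ z ∈ V, ∀ t : ℝ, 0 < t → t • z ∈ V

/-- The `1/2`-Gelfand–Shilov wavefront set of `u` relative to `Φ`: the complement in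
`ℂⁿ∖{0}` of the points having an open conic neighborhood in `ℂⁿ∖{0}` on which
`|u(z)| ≤ C e^{Φ(z) - c|z|²}`. -/
def wf {n : ℕ} (Φ : (Fin n → ℂ) → ℝ) (u : (Fin n → ℂ) → ℂ) : Set (Fin n → ℂ) :=
  {z₀ | z₀ ≠ 0 ∧ ¬ ∃ V : Set (Fin n → ℂ), IsOpen V ∧ IsConic V ∧ (0 : Fin n → ℂ) ∉ V ∧ z₀ ∈ V ∧
      ∃ C c : ℝ, 0 < C ∧ 0 < c ∧ ∀ z ∈ V, ‖u z‖ ≤ C * Real.exp (Φ z - c * eSq z)}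

/-- A holomorphic quadratic form on `ℂ^{2n} = ℂⁿ_z × ℂⁿ_θ`. -/
def IsCQuad2 {n : ℕ} (Ψ : (Fin n → ℂ) → (Fin n → ℂ) → ℂ) : Prop :=
  ∃ B : ((Fin n → ℂ) × (Fin n → ℂ)) →ₗ[ℂ] ((Fin n → ℂ) × (Fin n → ℂ)) →ₗ[ℂ] ℂ,
    ∀ z θ, Ψ z θ = B (z, θ) (z, θ)

/-- A real quadratic form on `ℂⁿ × ℂⁿ` viewed as a real vector space. -/
def IsRQuadPair {n : ℕ} (R : (Fin n → ℂ) → (Fin n → ℂ) → ℝ) : Prop :=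
  ∃ B : ((Fin n → ℂ) × (Fin n → ℂ)) →ₗ[ℝ] ((Fin n → ℂ) × (Fin n → ℂ)) →ₗ[ℝ] ℝ,
    ∀ z w, R z w = B (z, w) (z, w)

/-- The Bergman-form integral operator
`G u (z) = a ∫ e^{2Ψ(z, w̄)} u(w) e^{-2Φ(w)} L(dw)`. -/
def berg {n : ℕ} (a : ℂ) (Ψ : (Fin n → ℂ) → (Fin n → ℂ) → ℂ) (Φ : (Fin n → ℂ) → ℝ)
    (u : (Fin n → ℂ) → ℂ) (z : Fin n → ℂ) : ℂ :=
  a * ∫ w : Fin n → ℂ, Complex.exp (2 * Ψ z (star w)) * u w * (Real.exp (-2 * Φ w) : ℂ)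


open Metric Real Set

lemma circle_bound (f : ℂ → ℂ) (hf : Differentiable ℂ f) (a : ℂ) (ρ : ℝ) (hρ : 0 < ρ) :
    2 * π * ‖f a‖ ≤ ∫ θ in (0:ℝ)..(2*π), ‖f (circleMap a ρ θ)‖ := by
  have hd : DiffContOnCl ℂ f (ball a ρ) := hf.differentiableOn.diffContOnCl
  have key := hd.circleIntegral_sub_inv_smul (w := a) (mem_ball_self hρ)
  have h2 : (∮ z in C(a, ρ), (z - a)⁻¹ • f z)
      = ∫ θ in (0:ℝ)..(2*π), Complex.I • f (circleMap a ρ θ) := by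
    rw [circleIntegral]
    congr 1
    funext θ
    rw [deriv_circleMap, circleMap_sub_center]
    have hne : circleMap 0 ρ θ ≠ 0 := by
      simpa using circleMap_ne_center (c := 0) (R := ρ) hρ.ne' (θ := θ)
    simp only [smul_eq_mul]
    field_simp
  rw [h2] at key
  have h3 := intervalIntegral.norm_integral_le_integral_norm
    (f := fun θ => Complex.I • f (circleMap a ρ θ)) (a := 0) (b := 2*π)
    (μ := volume) (by positivity)
  simp only [norm_smul, Complex.norm_I, one_mul] at h3
  have h4 : ‖(2 * ↑π * Complex.I : ℂ) • f a‖ = 2 * π * ‖f a‖ := by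
    simp [norm_smul, Complex.norm_I, abs_of_pos Real.pi_pos]
  rw [key] at h3
  rw [h4] at h3
  exact h3

lemma disc_mean_real (f : ℂ → ℂ) (hf : Differentiable ℂ f) (a : ℂ) (r : ℝ) (hr : 0 < r) :
    π * r ^ 2 * ‖f a‖ ≤ ∫ w in closedBall a r, ‖f w‖ := by
  have htrans : (∫ w in closedBall a r, ‖f w‖)
      = ∫ w, (closedBall (0:ℂ) r).indicator (fun w => ‖f (a + w)‖) w := by
    rw [← integral_indicator (measurableSet_closedBall)]
    rw [← integral_add_left_eq_self (μ := volume)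
      (f := (closedBall a r).indicator (fun w => ‖f w‖)) a]
    congr 1
    funext w
    by_cases h : w ∈ closedBall (0:ℂ) r
    · rw [indicator_of_mem h, indicator_of_mem]
      simpa [dist_eq_norm] using h
    · rw [indicator_of_notMem h, indicator_of_notMem]
      intro hc
      exact h (by simpa [dist_eq_norm] using hc)
  rw [htrans, ← Complex.integral_comp_polarCoord_symm]
  set S : Set (ℝ × ℝ) := Ioc 0 r ×ˢ Ioo (-π) π with hSdef
  set G : ℝ × ℝ → ℝ := fun p => p.1 * ‖f (a + circleMap 0 p.1 p.2)‖ with hGdef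
  have hGcont : Continuous G := by
    apply continuous_fst.mul
    apply (hf.continuous.comp _).norm
    apply continuous_const.add
    unfold circleMap
    continuity
  have hsub : S ⊆ polarCoord.target := by
    rw [polarCoord_target]
    exact Set.prod_mono Ioc_subset_Ioi_self (subset_refl _)
  have hSm : MeasurableSet S := (measurableSet_Ioc).prod measurableSet_Ioo
  have hsymm : ∀ p : ℝ × ℝ, Complex.polarCoord.symm p = circleMap 0 p.1 p.2 := by
    intro p
    rw [Complex.polarCoord_symm_apply, circleMap]
    push_cast [Complex.exp_mul_I, Complex.ofReal_cos, Complex.ofReal_sin]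
    ring
  have step1 : (∫ p in polarCoord.target,
        p.1 • (closedBall (0:ℂ) r).indicator (fun w => ‖f (a + w)‖) (Complex.polarCoord.symm p))
      = ∫ p in S, G p := by
    have hinter : polarCoord.target ∩ S = S := inter_eq_self_of_subset_right hsub
    rw [show (∫ p in S, G p) = ∫ p in polarCoord.target ∩ S, G p by rw [hinter],
      ← setIntegral_indicator hSm]
    apply setIntegral_congr_fun polarCoord.open_target.measurableSet
    intro p hp
    dsimp only
    rw [polarCoord_target] at hp
    obtain ⟨hp1, hp2⟩ := hp
    have habs : ‖Complex.polarCoord.symm p‖ = p.1 := by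
      rw [hsymm]
      simp [abs_of_pos (mem_Ioi.mp hp1)]
    by_cases h : p.1 ≤ r
    · rw [indicator_of_mem, indicator_of_mem]
      · simp only [smul_eq_mul, hGdef, hsymm]
      · exact ⟨⟨mem_Ioi.mp hp1, h⟩, hp2⟩
      · rw [mem_closedBall_zero_iff, habs]; exact h
    · rw [indicator_of_notMem, indicator_of_notMem]
      · simp
      · intro hc; exact h hc.1.2
      · rw [mem_closedBall_zero_iff, habs]; exact h
  rw [step1]
  have hInt : IntegrableOn G S := by
    apply (hGcont.continuousOn.integrableOn_compact (isCompact_Icc (a := ((0:ℝ), -π)) (b := (r, π)))).mono_set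
    rw [← Icc_prod_Icc]
    exact Set.prod_mono Ioc_subset_Icc_self Ioo_subset_Icc_self
  have hprodmeas : (volume : Measure (ℝ × ℝ)).restrict S
      = (volume.restrict (Ioc (0:ℝ) r)).prod (volume.restrict (Ioo (-π) π)) := by
    rw [Measure.prod_restrict, hSdef, ← Measure.volume_eq_prod ℝ ℝ]
  have hIntP : Integrable G ((volume.restrict (Ioc (0:ℝ) r)).prod (volume.restrict (Ioo (-π) π))) := by
    rw [← hprodmeas]; exact hInt
  have step3 : ∫ p in S, G p = ∫ x in Ioc (0:ℝ) r, ∫ y in Ioo (-π) π, G (x, y) := by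
    rw [show (∫ p in S, G p) = ∫ p, G p ∂((volume : Measure (ℝ × ℝ)).restrict S) from rfl,
      hprodmeas]
    exact integral_prod G hIntP
  rw [step3]
  have inner_bd : ∀ x ∈ Ioc (0:ℝ) r, 2 * π * ‖f a‖ * x ≤ ∫ y in Ioo (-π) π, G (x, y) := by
    intro x hx
    obtain ⟨hx0, hxr⟩ := hx
    have h1 : (∫ y in Ioo (-π) π, G (x, y)) = x * ∫ y in Ioo (-π) π, ‖f (circleMap a x y)‖ := by
      simp only [hGdef]
      rw [← integral_const_mul]
      congr 1
      funext y
      congr 2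
      simp [circleMap]
    have hper : Function.Periodic (fun θ => ‖f (circleMap a x θ)‖) (2*π) :=
      (periodic_circleMap a x).comp fun z => ‖f z‖
    have h2 : (∫ y in Ioo (-π) π, ‖f (circleMap a x y)‖) = ∫ θ in (0:ℝ)..(2*π), ‖f (circleMap a x θ)‖ := by
      rw [← integral_Ioc_eq_integral_Ioo, ← intervalIntegral.integral_of_le (by linarith [pi_pos] : -π ≤ π)]
      have := hper.intervalIntegral_add_eq (-π) 0
      norm_num at this
      convert this using 2 <;> ring
    rw [h1, h2]
    have := circle_bound f hf a x hx0
    calc 2 * π * ‖f a‖ * x = x * (2 * π * ‖f a‖) := by ring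
      _ ≤ x * ∫ θ in (0:ℝ)..(2*π), ‖f (circleMap a x θ)‖ :=
        mul_le_mul_of_nonneg_left this hx0.le
  have houter : (∫ x in Ioc (0:ℝ) r, 2 * π * ‖f a‖ * x)
      ≤ ∫ x in Ioc (0:ℝ) r, ∫ y in Ioo (-π) π, G (x, y) := by
    apply setIntegral_mono_on _ _ measurableSet_Ioc inner_bd
    · exact (((continuous_const.mul continuous_id).continuousOn.integrableOn_compact (isCompact_Icc (a := (0:ℝ)) (b := r)))).mono_set
        Ioc_subset_Icc_self
    · exact hIntP.integral_prod_left
  refine le_trans (le_of_eq ?_) houter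
  rw [integral_const_mul, ← intervalIntegral.integral_of_le hr.le, integral_id]
  ring

lemma disc_mean (f : ℂ → ℂ) (hf : Differentiable ℂ f) (a : ℂ) (r : ℝ) (hr : 0 < r) :
    ENNReal.ofReal (π * r ^ 2) * (‖f a‖₊ : ℝ≥0∞) ≤ ∫⁻ w in closedBall a r, (‖f w‖₊ : ℝ≥0∞) := by
  have hi : IntegrableOn (fun w => ‖f w‖) (closedBall a r) :=
    hf.continuous.norm.continuousOn.integrableOn_compact (isCompact_closedBall a r)
  have h1 : ∫⁻ w in closedBall a r, (‖f w‖₊ : ℝ≥0∞)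
      = ENNReal.ofReal (∫ w in closedBall a r, ‖f w‖) := by
    rw [ofReal_integral_eq_lintegral_ofReal hi (Filter.Eventually.of_forall fun w => norm_nonneg _)]
    simp_rw [ofReal_norm, enorm_eq_nnnorm]
  rw [h1, ← enorm_eq_nnnorm, ← ofReal_norm, ← ENNReal.ofReal_mul (by positivity)]
  exact ENNReal.ofReal_le_ofReal (disc_mean_real f hf a r hr)

lemma poly_mean {n : ℕ} (f : (Fin n → ℂ) → ℂ) (hf : Differentiable ℂ f) (a : Fin n → ℂ)
    (r : ℝ) (hr : 0 < r) :
    ENNReal.ofReal (π * r ^ 2) ^ n * (‖f a‖₊ : ℝ≥0∞)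
      ≤ ∫⁻ w in closedBall a r, (‖f w‖₊ : ℝ≥0∞) := by
  induction n with
  | zero =>
    have hball : closedBall a r = Set.univ :=
      Set.eq_univ_of_forall (fun w => by
        rw [mem_closedBall, Subsingleton.elim w a, dist_self]; exact hr.le)
    have hvol : (volume : Measure (Fin 0 → ℂ)) Set.univ = 1 := by
      rw [volume_pi, Measure.pi_univ]
      simp
    have h1 : ∫⁻ w : Fin 0 → ℂ, (‖f w‖₊ : ℝ≥0∞) = (‖f a‖₊ : ℝ≥0∞) := by
      have : (fun w : Fin 0 → ℂ => (‖f w‖₊ : ℝ≥0∞)) = fun _ => (‖f a‖₊ : ℝ≥0∞) := by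
        funext w; rw [Subsingleton.elim w a]
      rw [this, lintegral_const, hvol, mul_one]
    rw [hball, Measure.restrict_univ, h1, pow_zero, one_mul]
  | succ n ih =>
    set a0 : ℂ := a 0 with ha0
    set a' : Fin n → ℂ := fun j => a ((0 : Fin (n+1)).succAbove j) with ha'
    set e := MeasurableEquiv.piFinSuccAbove (fun _ : Fin (n+1) => ℂ) 0 with he
    have mp : MeasurePreserving e volume (volume.prod volume) := by
      have := measurePreserving_piFinSuccAbove (fun _ : Fin (n+1) => (volume : Measure ℂ)) 0
      rwa [← volume_pi, ← volume_pi, ← Measure.volume_eq_prod] at this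
    have hpre : e.symm ⁻¹' closedBall a r = closedBall a0 r ×ˢ closedBall a' r := by
      ext p
      rw [Set.mem_preimage, closedBall_pi _ hr.le, MeasurableEquiv.piFinSuccAbove_symm_apply]
      simp only [Set.mem_pi, Set.mem_univ, forall_true_left, Fin.insertNthEquiv_apply]
      rw [Fin.forall_iff_succAbove (0 : Fin (n+1))]
      simp only [Fin.insertNth_apply_same, Fin.insertNth_apply_succAbove]
      constructor
      · rintro ⟨h1, h2⟩
        exact ⟨h1, by rw [closedBall_pi _ hr.le]; exact fun j _ => h2 j⟩
      · rintro ⟨h1, h2⟩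
        rw [closedBall_pi _ hr.le] at h2
        exact ⟨h1, fun j => h2 j (Set.mem_univ j)⟩
    have hcont : Continuous fun p : ℂ × (Fin n → ℂ) => f ((0 : Fin (n+1)).insertNth p.1 p.2) := by
      apply hf.continuous.comp
      apply continuous_pi
      intro i
      induction i using Fin.cases with
      | zero => simpa only [Fin.insertNth_apply_same] using continuous_fst
      | succ j =>
        have : ∀ p : ℂ × (Fin n → ℂ), Fin.insertNth (α := fun _ : Fin (n+1) => ℂ) 0 p.1 p.2 j.succ = p.2 j := by
          intro p
          have := Fin.insertNth_apply_succAbove (α := fun _ : Fin (n+1) => ℂ) (i := (0 : Fin (n+1))) (x := p.1) (p := p.2) j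
          simpa [Fin.succAbove_zero] using this
        simp_rw [this]
        exact (continuous_apply j).comp continuous_snd
    have key : ∫⁻ w in closedBall a r, (‖f w‖₊ : ℝ≥0∞)
        = ∫⁻ x in closedBall a0 r, ∫⁻ y in closedBall a' r,
            (‖f ((0 : Fin (n+1)).insertNth x y)‖₊ : ℝ≥0∞) := by
      have h1 := (mp.symm e).setLIntegral_comp_preimage_emb e.symm.measurableEmbedding
        (fun w => (‖f w‖₊ : ℝ≥0∞)) (closedBall a r)
      rw [← h1, hpre]
      have h2 : ∀ p : ℂ × (Fin n → ℂ), e.symm p = (0 : Fin (n+1)).insertNth p.1 p.2 := by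
        intro p
        rw [MeasurableEquiv.piFinSuccAbove_symm_apply]
        rfl
      simp_rw [h2]
      rw [← Measure.prod_restrict]
      exact lintegral_prod _ ((hcont.measurable.nnnorm.coe_nnreal_ennreal).aemeasurable)
    rw [key]
    have step1 : ∀ x : ℂ, ENNReal.ofReal (π * r ^ 2) ^ n
          * (‖f ((0 : Fin (n+1)).insertNth x a')‖₊ : ℝ≥0∞)
        ≤ ∫⁻ y in closedBall a' r, (‖f ((0 : Fin (n+1)).insertNth x y)‖₊ : ℝ≥0∞) := by
      intro x
      apply ih (fun y => f ((0 : Fin (n+1)).insertNth x y))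
      apply hf.comp
      rw [differentiable_pi]
      intro i
      induction i using Fin.cases with
      | zero => simp only [Fin.insertNth_apply_same]; exact differentiable_const x
      | succ j =>
        have : ∀ y : Fin n → ℂ, Fin.insertNth (α := fun _ : Fin (n+1) => ℂ) 0 x y j.succ = y j := by
          intro y
          have := Fin.insertNth_apply_succAbove (α := fun _ : Fin (n+1) => ℂ) (i := (0 : Fin (n+1))) (x := x) (p := y) j
          simpa [Fin.succAbove_zero] using this
        simp_rw [this]
        exact differentiable_pi.mp differentiable_id j
    have step2 : (∫⁻ x in closedBall a0 r, ENNReal.ofReal (π * r ^ 2) ^ n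
          * (‖f ((0 : Fin (n+1)).insertNth x a')‖₊ : ℝ≥0∞))
        ≤ ∫⁻ x in closedBall a0 r, ∫⁻ y in closedBall a' r,
            (‖f ((0 : Fin (n+1)).insertNth x y)‖₊ : ℝ≥0∞) :=
      lintegral_mono fun x => step1 x
    have hF : Differentiable ℂ fun x : ℂ => f ((0 : Fin (n+1)).insertNth x a') := by
      apply hf.comp
      rw [differentiable_pi]
      intro i
      induction i using Fin.cases with
      | zero => simp only [Fin.insertNth_apply_same]; exact differentiable_id
      | succ j =>
        have : ∀ x : ℂ, Fin.insertNth (α := fun _ : Fin (n+1) => ℂ) 0 x a' j.succ = a' j := by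
          intro x
          have := Fin.insertNth_apply_succAbove (α := fun _ : Fin (n+1) => ℂ) (i := (0 : Fin (n+1))) (x := x) (p := a') j
          simpa [Fin.succAbove_zero] using this
        simp_rw [this]
        exact differentiable_const _
    have step3 : ENNReal.ofReal (π * r ^ 2) ^ n
          * (ENNReal.ofReal (π * r ^ 2) * (‖f ((0 : Fin (n+1)).insertNth a0 a')‖₊ : ℝ≥0∞))
        ≤ ∫⁻ x in closedBall a0 r, ENNReal.ofReal (π * r ^ 2) ^ n
          * (‖f ((0 : Fin (n+1)).insertNth x a')‖₊ : ℝ≥0∞) := by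
      rw [lintegral_const_mul' _ _ (by simp [ENNReal.pow_ne_top, ENNReal.ofReal_ne_top])]
      exact mul_le_mul_right (disc_mean _ hF a0 r hr) _
    have hins : (0 : Fin (n+1)).insertNth a0 a' = a := by
      funext i
      induction i using Fin.cases with
      | zero => exact Fin.insertNth_apply_same _ _ _
      | succ j =>
        have := Fin.insertNth_apply_succAbove (α := fun _ : Fin (n+1) => ℂ) (i := (0 : Fin (n+1))) (x := a0) (p := a') j
        simpa [Fin.succAbove_zero, ha'] using this
    rw [hins] at step3
    calc ENNReal.ofReal (π * r ^ 2) ^ (n+1) * (‖f a‖₊ : ℝ≥0∞)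
        = ENNReal.ofReal (π * r ^ 2) ^ n
            * (ENNReal.ofReal (π * r ^ 2) * (‖f a‖₊ : ℝ≥0∞)) := by
          rw [pow_succ]; ring
      _ ≤ _ := le_trans step3 step2

lemma eSq_nonneg {n : ℕ} (z : Fin n → ℂ) : 0 ≤ eSq z :=
  Finset.sum_nonneg fun i _ => Complex.normSq_nonneg _

lemma jb_pos {n : ℕ} (z : Fin n → ℂ) : 0 < jb z :=
  Real.sqrt_pos.mpr (by linarith [eSq_nonneg z])

lemma one_le_jb {n : ℕ} (z : Fin n → ℂ) : 1 ≤ jb z := by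
  rw [show (1:ℝ) = Real.sqrt 1 by simp [Real.sqrt_one]]
  exact Real.sqrt_le_sqrt (by linarith [eSq_nonneg z])

lemma jb_sq {n : ℕ} (z : Fin n → ℂ) : jb z ^ 2 = 1 + eSq z :=
  Real.sq_sqrt (by linarith [eSq_nonneg z])

lemma norm_le_jb {n : ℕ} (z : Fin n → ℂ) : ‖z‖ ≤ jb z := by
  rw [pi_norm_le_iff_of_nonneg (jb_pos z).le]
  intro i
  have h1 : Complex.normSq (z i) ≤ eSq z :=
    Finset.single_le_sum (f := fun i => Complex.normSq (z i))
      (fun j _ => Complex.normSq_nonneg _) (Finset.mem_univ i)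
  have h2 : ‖z i‖ ^ 2 ≤ jb z ^ 2 := by
    rw [jb_sq]
    calc ‖z i‖ ^ 2 = Complex.normSq (z i) := by
          rw [Complex.sq_norm]
      _ ≤ eSq z := h1
      _ ≤ 1 + eSq z := by linarith
  nlinarith [norm_nonneg (z i), (jb_pos z).le]

lemma normSq_add_le (u v : ℂ) :
    Complex.normSq (u + v) ≤ 2 * Complex.normSq u + 2 * Complex.normSq v := by
  simp only [Complex.normSq_apply, Complex.add_re, Complex.add_im]
  nlinarith [sq_nonneg (u.re - v.re), sq_nonneg (u.im - v.im)]

lemma eSq_le {n : ℕ} (z d : Fin n → ℂ) : eSq (z + d) ≤ 2 * eSq z + 2 * eSq d := by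
  unfold eSq
  rw [Finset.mul_sum, Finset.mul_sum, ← Finset.sum_add_distrib]
  exact Finset.sum_le_sum fun i _ => by
    simpa using normSq_add_le (z i) (d i)

lemma eSq_le_card {n : ℕ} (d : Fin n → ℂ) (hd : ‖d‖ ≤ 1) : eSq d ≤ n := by
  unfold eSq
  calc ∑ i, Complex.normSq (d i) ≤ ∑ _i : Fin n, (1:ℝ) := by
        apply Finset.sum_le_sum
        intro i _
        have h1 : ‖d i‖ ≤ 1 := (norm_le_pi_norm d i).trans hd
        rw [← Complex.sq_norm]
        nlinarith [norm_nonneg (d i)]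
    _ = n := by simp

/-- If `w` is within (sup-norm) distance 1 of `z`, then brackets are comparable. -/
lemma jb_comp {n : ℕ} (z w : Fin n → ℂ) (h : ‖w - z‖ ≤ 1) :
    jb w ≤ Real.sqrt (2 * n + 2) * jb z := by
  have h1 : eSq w ≤ 2 * eSq z + 2 * n := by
    have := eSq_le z (w - z)
    have h2 := eSq_le_card (w - z) h
    simp only [add_sub_cancel] at this
    linarith
  have h3 : 1 + eSq w ≤ (2 * n + 2) * (1 + eSq z) := by
    have := eSq_nonneg z
    have hn : (0:ℝ) ≤ n := Nat.cast_nonneg n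
    nlinarith
  calc jb w = Real.sqrt (1 + eSq w) := rfl
    _ ≤ Real.sqrt ((2 * n + 2) * (1 + eSq z)) := Real.sqrt_le_sqrt h3
    _ = Real.sqrt (2 * n + 2) * jb z := by
        rw [Real.sqrt_mul (by positivity)]; rfl

lemma bilin_bound {n : ℕ} (B : (Fin n → ℂ) →ₗ[ℝ] (Fin n → ℂ) →ₗ[ℝ] ℝ) :
    ∃ M : ℝ, 0 ≤ M ∧ ∀ x y, |B x y| ≤ M * ‖x‖ * ‖y‖ := by
  let L : (Fin n → ℂ) →ₗ[ℝ] ((Fin n → ℂ) →L[ℝ] ℝ) :=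
    (LinearMap.toContinuousLinearMap : ((Fin n → ℂ) →ₗ[ℝ] ℝ) ≃ₗ[ℝ] ((Fin n → ℂ) →L[ℝ] ℝ)).toLinearMap.comp B
  let Lc : (Fin n → ℂ) →L[ℝ] ((Fin n → ℂ) →L[ℝ] ℝ) := LinearMap.toContinuousLinearMap L
  refine ⟨‖Lc‖, Lc.opNorm_nonneg, fun x y => ?_⟩
  have h1 : B x y = (Lc x) y := rfl
  rw [h1]
  calc |(Lc x) y| = ‖(Lc x) y‖ := rfl
    _ ≤ ‖Lc x‖ * ‖y‖ := (Lc x).le_opNorm y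
    _ ≤ ‖Lc‖ * ‖x‖ * ‖y‖ := by
        have := Lc.le_opNorm x
        nlinarith [norm_nonneg y, norm_nonneg x, Lc.opNorm_nonneg, (Lc x).opNorm_nonneg]

lemma quad_continuous {n : ℕ} (B : (Fin n → ℂ) →ₗ[ℝ] (Fin n → ℂ) →ₗ[ℝ] ℝ) :
    Continuous (fun z => B z z) := by
  let L : (Fin n → ℂ) →ₗ[ℝ] ((Fin n → ℂ) →L[ℝ] ℝ) :=
    (LinearMap.toContinuousLinearMap : ((Fin n → ℂ) →ₗ[ℝ] ℝ) ≃ₗ[ℝ] ((Fin n → ℂ) →L[ℝ] ℝ)).toLinearMap.comp B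
  let Lc : (Fin n → ℂ) →L[ℝ] ((Fin n → ℂ) →L[ℝ] ℝ) := LinearMap.toContinuousLinearMap L
  have : (fun z => B z z) = fun z => (Lc z) z := rfl
  rw [this]
  exact Lc.continuous₂.comp (continuous_id.prodMk continuous_id)

lemma jb_continuous {n : ℕ} : Continuous (fun z : Fin n → ℂ => jb z) := by
  apply Real.continuous_sqrt.comp
  apply continuous_const.add
  exact continuous_finset_sum _ fun i _ =>
    Complex.continuous_normSq.comp (continuous_apply i)

lemma hnorm_finite {n : ℕ} (Φ : (Fin n → ℂ) → ℝ) (u : (Fin n → ℂ) → ℂ)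
    (N C : ℝ) (hb : ∀ z, ‖u z‖ ≤ C * jb z ^ N * Real.exp (Φ z))
    (s : ℝ) (hs : 2 * s + 2 * N < -(2 * n)) : hnorm Φ s u < ⊤ := by
  have hp : 2 * N + 2 * s ≤ 0 := by
    have : (0:ℝ) ≤ 2 * n := by positivity
    linarith
  -- pointwise bound of the integrand
  have hpt : ∀ z : Fin n → ℂ,
      (‖u z‖₊ : ℝ≥0∞) ^ 2 * ENNReal.ofReal (jb z ^ (2 * s) * Real.exp (-2 * Φ z))
        ≤ ENNReal.ofReal (C ^ 2 * (2:ℝ) ^ (-(2 * N + 2 * s)) * (1 + ‖z‖) ^ (2 * N + 2 * s)) := by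
    intro z
    set X := jb z with hX
    have hXpos : 0 < X := jb_pos z
    have h1 : (‖u z‖₊ : ℝ≥0∞) ^ 2 * ENNReal.ofReal (X ^ (2 * s) * Real.exp (-2 * Φ z))
        = ENNReal.ofReal (‖u z‖ ^ 2 * (X ^ (2 * s) * Real.exp (-2 * Φ z))) := by
      rw [ENNReal.ofReal_mul (by positivity), ← enorm_eq_nnnorm, ← ofReal_norm,
        ← ENNReal.ofReal_pow (norm_nonneg _), ← ENNReal.ofReal_mul (by positivity),
        ← ENNReal.ofReal_mul (by positivity)]
    rw [h1]
    apply ENNReal.ofReal_le_ofReal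
    have h2 : ‖u z‖ ^ 2 ≤ (C * X ^ N * Real.exp (Φ z)) ^ 2 :=
      pow_le_pow_left₀ (norm_nonneg _) (hb z) 2
    have h3 : ‖u z‖ ^ 2 * (X ^ (2 * s) * Real.exp (-2 * Φ z))
        ≤ (C * X ^ N * Real.exp (Φ z)) ^ 2 * (X ^ (2 * s) * Real.exp (-2 * Φ z)) := by
      apply mul_le_mul_of_nonneg_right h2 (by positivity)
    refine h3.trans ?_
    have e2 : (X ^ N) ^ 2 * X ^ (2 * s) = X ^ (2 * N + 2 * s) := by
      rw [← Real.rpow_natCast (X ^ N) 2, ← Real.rpow_mul hXpos.le, ← Real.rpow_add hXpos]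
      norm_num
      ring_nf
    have e3 : Real.exp (Φ z) ^ 2 * Real.exp (-2 * Φ z) = 1 := by
      rw [← Real.exp_nat_mul, ← Real.exp_add]
      norm_num
    have e4 : (C * X ^ N * Real.exp (Φ z)) ^ 2 * (X ^ (2 * s) * Real.exp (-2 * Φ z))
        = C ^ 2 * ((X ^ N) ^ 2 * X ^ (2 * s)) * (Real.exp (Φ z) ^ 2 * Real.exp (-2 * Φ z)) := by
      ring
    rw [e4, e2, e3, mul_one]
    -- now : C ^ 2 * X ^ (2N+2s) ≤ C² * 2^{-(2N+2s)} * (1+‖z‖)^(2N+2s)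
    rw [mul_assoc]
    apply mul_le_mul_of_nonneg_left _ (sq_nonneg C)
    have h5 : 1 + ‖z‖ ≤ 2 * X := by
      have := one_le_jb z
      have := norm_le_jb z
      linarith
    have h6 : (1 + ‖z‖) ^ (2 * N + 2 * s) ≥ (2 * X) ^ (2 * N + 2 * s) :=
      Real.rpow_le_rpow_of_nonpos (by positivity) h5 hp
    have h7 : (2 * X) ^ (2 * N + 2 * s) = 2 ^ (2 * N + 2 * s) * X ^ (2 * N + 2 * s) :=
      Real.mul_rpow (by norm_num) hXpos.le
    have h8 : (0:ℝ) < 2 ^ (2 * N + 2 * s) := Real.rpow_pos_of_pos (by norm_num) _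
    rw [Real.rpow_neg (by norm_num : (0:ℝ) ≤ 2)]
    rw [ge_iff_le, h7] at h6
    calc X ^ (2 * N + 2 * s)
        = (2 ^ (2 * N + 2 * s))⁻¹ * (2 ^ (2 * N + 2 * s) * X ^ (2 * N + 2 * s)) := by
          field_simp
      _ ≤ (2 ^ (2 * N + 2 * s))⁻¹ * (1 + ‖z‖) ^ (2 * N + 2 * s) := by
          apply mul_le_mul_of_nonneg_left h6 (by positivity)
  calc hnorm Φ s u
      ≤ ∫⁻ z : Fin n → ℂ,
          ENNReal.ofReal (C ^ 2 * (2:ℝ) ^ (-(2 * N + 2 * s)) * (1 + ‖z‖) ^ (2 * N + 2 * s)) :=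
        lintegral_mono hpt
    _ = ∫⁻ z : Fin n → ℂ, ENNReal.ofReal (C ^ 2 * (2:ℝ) ^ (-(2 * N + 2 * s)))
          * ENNReal.ofReal ((1 + ‖z‖) ^ (2 * N + 2 * s)) := by
        congr 1
        funext z
        rw [← ENNReal.ofReal_mul (by positivity)]
    _ = ENNReal.ofReal (C ^ 2 * (2:ℝ) ^ (-(2 * N + 2 * s)))
          * ∫⁻ z : Fin n → ℂ, ENNReal.ofReal ((1 + ‖z‖) ^ (2 * N + 2 * s)) :=
        lintegral_const_mul' _ _ ENNReal.ofReal_ne_top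
    _ < ⊤ := by
        apply ENNReal.mul_lt_top ENNReal.ofReal_lt_top
        have hfr : (Module.finrank ℝ (Fin n → ℂ) : ℝ) < -(2 * N + 2 * s) := by
          have : Module.finrank ℝ (Fin n → ℂ) = 2 * n := by
            rw [Module.finrank_pi_fintype]
            simp [Complex.finrank_real_complex]
            ring
          rw [this]
          push_cast
          linarith
        have := finite_integral_one_add_norm (E := Fin n → ℂ) (μ := volume) hfr
        simpa using this

lemma pointwise_of_hnorm {n : ℕ} (Φ : (Fin n → ℂ) → ℝ)
    (B : (Fin n → ℂ) →ₗ[ℝ] (Fin n → ℂ) →ₗ[ℝ] ℝ) (hB : ∀ z, Φ z = B z z)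
    (u : (Fin n → ℂ) → ℂ) (hu : Differentiable ℂ u) (s : ℝ) (hfin : hnorm Φ s u < ⊤) :
    ∃ C : ℝ, 0 < C ∧ ∀ z, ‖u z‖ ≤ C * jb z ^ ((n : ℝ) - s) * Real.exp (Φ z) := by
  obtain ⟨M, hM0, hM⟩ := bilin_bound B
  have hΦc : Continuous Φ := by
    have : Φ = fun z => B z z := funext hB
    rw [this]; exact quad_continuous B
  set K := Real.sqrt (2 * n + 2) with hKdef
  have hK1 : 1 ≤ K := by
    rw [hKdef, show (1:ℝ) = Real.sqrt 1 by simp]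
    apply Real.sqrt_le_sqrt
    have : (0:ℝ) ≤ n := Nat.cast_nonneg n
    linarith
  have hKpos : 0 < K := lt_of_lt_of_le one_pos hK1
  set H := (hnorm Φ s u).toReal with hHdef
  have hH0 : 0 ≤ H := ENNReal.toReal_nonneg
  set D := K ^ (2 * |s|) * Real.exp (6 * M) * H * (π⁻¹) ^ n with hDdef
  have hD0 : 0 ≤ D := by positivity
  refine ⟨Real.sqrt D + 1, by positivity, fun a => ?_⟩
  set J := jb a with hJdef
  have hJpos : 0 < J := jb_pos a
  have hJ1 : 1 ≤ J := one_le_jb a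
  set r : ℝ := 1 / J with hrdef
  have hr : 0 < r := by positivity
  have hr1 : r ≤ 1 := by
    rw [hrdef, div_le_one hJpos]; exact hJ1
  -- comparison bounds on the ball
  have hball : ∀ w ∈ closedBall a r, ‖w - a‖ ≤ 1 := fun w hw => by
    have : dist w a ≤ r := mem_closedBall.mp hw
    rw [dist_eq_norm] at this
    linarith
  have hPhi : ∀ w ∈ closedBall a r, |Φ w - Φ a| ≤ 3 * M := by
    intro w hw
    set d := w - a with hd
    have hd1 : ‖d‖ ≤ r := by
      have : dist w a ≤ r := mem_closedBall.mp hw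
      rwa [dist_eq_norm] at this
    have hd2 : ‖d‖ ≤ 1 := le_trans hd1 hr1
    have hprod : ‖a‖ * ‖d‖ ≤ 1 := by
      have hna : ‖a‖ ≤ J := norm_le_jb a
      calc ‖a‖ * ‖d‖ ≤ J * r := by
            apply mul_le_mul hna hd1 (norm_nonneg _) hJpos.le
        _ = 1 := by rw [hrdef]; field_simp
    have hwsum : w = a + d := by rw [hd]; ring
    have e : Φ w - Φ a = B a d + B d a + B d d := by
      rw [hB w, hB a, hwsum]
      simp only [map_add, LinearMap.add_apply]
      ring
    rw [e]
    have h1 := hM a d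
    have h2 := hM d a
    have h3 := hM d d
    have habs : |B a d + B d a + B d d| ≤ |B a d| + |B d a| + |B d d| :=
      (abs_add_le _ _).trans (by gcongr; exact abs_add_le _ _)
    have hdd : ‖d‖ * ‖d‖ ≤ 1 := by nlinarith [norm_nonneg d]
    nlinarith [norm_nonneg a, norm_nonneg d]
  have hwt : ∀ w ∈ closedBall a r, J ^ (2*s) ≤ K ^ (2*|s|) * jb w ^ (2*s) := by
    intro w hw
    have hjb1 : jb w ≤ K * J := jb_comp a w (hball w hw)
    have hjb2 : J ≤ K * jb w := by
      apply jb_comp w a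
      rw [norm_sub_rev]
      exact hball w hw
    have hjwpos : 0 < jb w := jb_pos w
    rcases le_or_gt 0 s with hs0 | hs0
    · rw [abs_of_nonneg hs0]
      calc J ^ (2*s) ≤ (K * jb w) ^ (2*s) :=
            Real.rpow_le_rpow hJpos.le hjb2 (by positivity)
        _ = K ^ (2*s) * jb w ^ (2*s) := Real.mul_rpow hKpos.le hjwpos.le
    · rw [abs_of_neg hs0]
      have h1 : (K * J) ^ (2*s) ≤ jb w ^ (2*s) :=
        Real.rpow_le_rpow_of_nonpos (by positivity) hjb1 (by linarith)
      have h2 : (K * J) ^ (2*s) = K ^ (2*s) * J ^ (2*s) := Real.mul_rpow hKpos.le hJpos.le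
      have h3 : K ^ (2*(-s)) * K ^ (2*s) = 1 := by
        rw [← Real.rpow_add hKpos]
        norm_num
      have h4 : 0 < K ^ (2*(-s)) := Real.rpow_pos_of_pos hKpos _
      calc J ^ (2*s) = K ^ (2*(-s)) * (K ^ (2*s) * J ^ (2*s)) := by
            rw [← mul_assoc, h3, one_mul]
        _ = K ^ (2*(-s)) * (K * J) ^ (2*s) := by rw [h2]
        _ ≤ K ^ (2*(-s)) * jb w ^ (2*s) := by
            apply mul_le_mul_of_nonneg_left h1 h4.le
  have hexp : ∀ w ∈ closedBall a r,
      Real.exp (-2 * Φ a) ≤ Real.exp (6 * M) * Real.exp (-2 * Φ w) := by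
    intro w hw
    rw [← Real.exp_add]
    apply Real.exp_le_exp.mpr
    have := abs_le.mp (hPhi w hw)
    linarith [this.1, this.2]
  set κ := K ^ (2*|s|) * Real.exp (6*M) * (J ^ (2*s) * Real.exp (-2 * Φ a))⁻¹ with hκdef
  have hbase : 0 < J ^ (2*s) * Real.exp (-2 * Φ a) :=
    mul_pos (Real.rpow_pos_of_pos hJpos _) (Real.exp_pos _)
  have hκpos : 0 < κ := by
    apply mul_pos (mul_pos (Real.rpow_pos_of_pos hKpos _) (Real.exp_pos _))
    exact inv_pos.mpr hbase
  have hone : ∀ w ∈ closedBall a r,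
      (1:ℝ) ≤ jb w ^ (2*s) * Real.exp (-2 * Φ w) * κ := by
    intro w hw
    have hmul : J ^ (2*s) * Real.exp (-2 * Φ a)
        ≤ (K ^ (2*|s|) * jb w ^ (2*s)) * (Real.exp (6*M) * Real.exp (-2 * Φ w)) := by
      apply mul_le_mul (hwt w hw) (hexp w hw) (Real.exp_pos _).le
      exact mul_nonneg (Real.rpow_pos_of_pos hKpos _).le (Real.rpow_pos_of_pos (jb_pos w) _).le
    calc (1:ℝ) = (J ^ (2*s) * Real.exp (-2 * Φ a)) * (J ^ (2*s) * Real.exp (-2 * Φ a))⁻¹ :=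
          (mul_inv_cancel₀ hbase.ne').symm
      _ ≤ ((K ^ (2*|s|) * jb w ^ (2*s)) * (Real.exp (6*M) * Real.exp (-2 * Φ w)))
            * (J ^ (2*s) * Real.exp (-2 * Φ a))⁻¹ := by
          apply mul_le_mul_of_nonneg_right hmul (inv_nonneg.mpr hbase.le)
      _ = jb w ^ (2*s) * Real.exp (-2 * Φ w) * κ := by rw [hκdef]; ring
  -- apply the sub-mean value property to u²
  have pm := poly_mean (fun z => u z * u z) (hu.mul hu) a r hr
  have hcoe : ∀ w : Fin n → ℂ, (‖u w * u w‖₊ : ℝ≥0∞) = (‖u w‖₊ : ℝ≥0∞) ^ 2 := by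
    intro w
    rw [nnnorm_mul, pow_two, ENNReal.coe_mul]
  simp only [hcoe] at pm
  have hwc : Continuous fun w : Fin n → ℂ => jb w ^ (2*s) * Real.exp (-2 * Φ w) := by
    apply Continuous.mul
    · exact Continuous.rpow_const jb_continuous (fun w => Or.inl (jb_pos w).ne')
    · exact Real.continuous_exp.comp (continuous_const.mul hΦc)
  have hmeas : Measurable fun w : Fin n → ℂ =>
      ENNReal.ofReal κ * ((‖u w‖₊ : ℝ≥0∞) ^ 2
        * ENNReal.ofReal (jb w ^ (2*s) * Real.exp (-2 * Φ w))) := by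
    apply measurable_const.fun_mul
    apply Measurable.fun_mul
    · exact (hu.continuous.measurable.nnnorm.coe_nnreal_ennreal).pow_const 2
    · exact ENNReal.measurable_ofReal.comp hwc.measurable
  have step : (∫⁻ w in closedBall a r, (‖u w‖₊ : ℝ≥0∞) ^ 2)
      ≤ ENNReal.ofReal κ * hnorm Φ s u := by
    calc (∫⁻ w in closedBall a r, (‖u w‖₊ : ℝ≥0∞) ^ 2)
        ≤ ∫⁻ w in closedBall a r, ENNReal.ofReal κ * ((‖u w‖₊ : ℝ≥0∞) ^ 2
            * ENNReal.ofReal (jb w ^ (2*s) * Real.exp (-2 * Φ w))) := by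
          apply setLIntegral_mono hmeas
          intro w hw
          calc (‖u w‖₊ : ℝ≥0∞) ^ 2
              = (‖u w‖₊ : ℝ≥0∞) ^ 2 * 1 := (mul_one _).symm
            _ ≤ (‖u w‖₊ : ℝ≥0∞) ^ 2
                * ENNReal.ofReal (jb w ^ (2*s) * Real.exp (-2 * Φ w) * κ) := by
                apply mul_le_mul_right
                exact ENNReal.one_le_ofReal.mpr (hone w hw)
            _ = ENNReal.ofReal κ * ((‖u w‖₊ : ℝ≥0∞) ^ 2
                * ENNReal.ofReal (jb w ^ (2*s) * Real.exp (-2 * Φ w))) := by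
                rw [ENNReal.ofReal_mul
                  (mul_nonneg (Real.rpow_pos_of_pos (jb_pos w) _).le (Real.exp_pos _).le)]
                ring
      _ = ENNReal.ofReal κ * ∫⁻ w in closedBall a r, ((‖u w‖₊ : ℝ≥0∞) ^ 2
            * ENNReal.ofReal (jb w ^ (2*s) * Real.exp (-2 * Φ w))) :=
          lintegral_const_mul' _ _ ENNReal.ofReal_ne_top
      _ ≤ ENNReal.ofReal κ * hnorm Φ s u := by
          apply mul_le_mul_right
          exact setLIntegral_le_lintegral _ _
  have big : ENNReal.ofReal (π * r ^ 2) ^ n * ((‖u a‖₊ : ℝ≥0∞)) ^ 2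
      ≤ ENNReal.ofReal κ * hnorm Φ s u := le_trans pm step
  have hne : ENNReal.ofReal κ * hnorm Φ s u ≠ ⊤ :=
    ENNReal.mul_ne_top ENNReal.ofReal_ne_top hfin.ne
  have hreal : (π * r ^ 2) ^ n * ‖u a‖ ^ 2 ≤ κ * H := by
    have h10 := ENNReal.toReal_mono hne big
    rw [ENNReal.toReal_mul, ENNReal.toReal_mul, ENNReal.toReal_pow,
      ENNReal.toReal_ofReal (by positivity), ENNReal.toReal_ofReal hκpos.le,
      ENNReal.toReal_pow, ENNReal.coe_toReal, coe_nnnorm] at h10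
    exact h10
  -- real algebra
  set Y := J ^ ((n : ℝ) - s) * Real.exp (Φ a) with hYdef
  have hYpos : 0 < Y := mul_pos (Real.rpow_pos_of_pos hJpos _) (Real.exp_pos _)
  have hppos : (0:ℝ) < (π * r ^ 2) ^ n := by positivity
  have h9 : ‖u a‖ ^ 2 ≤ κ * H * ((π * r ^ 2) ^ n)⁻¹ := by
    have h11 := mul_le_mul_of_nonneg_right hreal (inv_nonneg.mpr hppos.le)
    calc ‖u a‖ ^ 2 = (π * r ^ 2) ^ n * ‖u a‖ ^ 2 * ((π * r ^ 2) ^ n)⁻¹ := by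
          field_simp
      _ ≤ κ * H * ((π * r ^ 2) ^ n)⁻¹ := h11
  have hYsq : Y ^ 2 = J ^ (2 * ((n : ℝ) - s)) * Real.exp (2 * Φ a) := by
    rw [hYdef, mul_pow]
    congr 1
    · rw [← Real.rpow_natCast (J ^ ((n:ℝ) - s)) 2, ← Real.rpow_mul hJpos.le]
      congr 1
      push_cast
      ring
    · rw [show (2:ℝ) * Φ a = ((2:ℕ) : ℝ) * Φ a by push_cast; ring, Real.exp_nat_mul]
  have hrn : ((π * r ^ 2) ^ n)⁻¹ = (π⁻¹) ^ n * J ^ (2 * (n : ℝ)) := by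
    have : (π * r ^ 2)⁻¹ = π⁻¹ * J ^ 2 := by
      rw [hrdef]
      field_simp
    rw [← inv_pow, this, mul_pow, ← pow_mul, ← Real.rpow_natCast J (2 * n)]
    push_cast
    ring_nf
  have e5 : J ^ (2 * ((n : ℝ) - s)) = J ^ (2 * (n : ℝ)) * (J ^ (2*s))⁻¹ := by
    rw [← Real.rpow_neg hJpos.le, ← Real.rpow_add hJpos]
    congr 1
    ring
  have e6 : Real.exp (2 * Φ a) = (Real.exp (-2 * Φ a))⁻¹ := by
    rw [← Real.exp_neg]
    congr 1
    ring
  have key2 : κ * H * ((π * r ^ 2) ^ n)⁻¹ = D * Y ^ 2 := by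
    rw [hYsq, hrn, e5, e6, hDdef, hκdef, mul_inv]
    ring
  rw [key2] at h9
  have hsq : ‖u a‖ ≤ Real.sqrt D * Y := by
    have h12 : ‖u a‖ = Real.sqrt (‖u a‖ ^ 2) := (Real.sqrt_sq (norm_nonneg _)).symm
    rw [h12]
    calc Real.sqrt (‖u a‖ ^ 2) ≤ Real.sqrt (D * Y ^ 2) := Real.sqrt_le_sqrt h9
      _ = Real.sqrt D * Y := by rw [Real.sqrt_mul hD0, Real.sqrt_sq hYpos.le]
  calc ‖u a‖ ≤ Real.sqrt D * Y := hsq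
    _ ≤ (Real.sqrt D + 1) * Y := by
        apply mul_le_mul_of_nonneg_right _ hYpos.le
        linarith
    _ = (Real.sqrt D + 1) * J ^ ((n : ℝ) - s) * Real.exp (Φ a) := by
        rw [hYdef]; ring

/-- For a strictly plurisubharmonic quadratic form `Φ` on `ℂⁿ` and an
entire function `u` on `ℂⁿ`:
(i) `u ∈ H^s_Φ(ℂⁿ)` for every `s` iff for every `N` there is `C > 0` with
    `|u(z)| ≤ C ⟨z⟩^N e^{Φ(z)}` on `ℂⁿ`;
(ii) `u ∈ H^s_Φ(ℂⁿ)` for some `s` iff there are `N` and `C > 0` with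
    `|u(z)| ≤ C ⟨z⟩^N e^{Φ(z)}` on `ℂⁿ`. -/
theorem stmt_2 (n : ℕ) (hn : 1 ≤ n) (Φ : (Fin n → ℂ) → ℝ) (hΦ : IsSPSH Φ)
    (u : (Fin n → ℂ) → ℂ) (hu : Differentiable ℂ u) :
    ((∀ s : ℝ, hnorm Φ s u < ⊤) ↔
        ∀ N : ℝ, ∃ C : ℝ, 0 < C ∧ ∀ z : Fin n → ℂ, ‖u z‖ ≤ C * jb z ^ N * Real.exp (Φ z)) ∧
    ((∃ s : ℝ, hnorm Φ s u < ⊤) ↔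
        ∃ N C : ℝ, 0 < C ∧ ∀ z : Fin n → ℂ, ‖u z‖ ≤ C * jb z ^ N * Real.exp (Φ z)) := by
  obtain ⟨⟨B, hB⟩, -⟩ := hΦ
  have forward : ∀ s : ℝ, hnorm Φ s u < ⊤ →
      ∃ C : ℝ, 0 < C ∧ ∀ z : Fin n → ℂ, ‖u z‖ ≤ C * jb z ^ ((n : ℝ) - s) * Real.exp (Φ z) :=
    fun s hs => pointwise_of_hnorm Φ B hB u hu s hs
  constructor
  · constructor
    · intro hall N
      obtain ⟨C, hC, hbd⟩ := forward ((n : ℝ) - N) (hall _)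
      refine ⟨C, hC, fun z => ?_⟩
      have h := hbd z
      rwa [show (n:ℝ) - ((n:ℝ) - N) = N by ring] at h
    · intro hbd s
      obtain ⟨C, hC, h⟩ := hbd (-s - (n:ℝ) - 1)
      exact hnorm_finite Φ u _ C h s (by push_cast; linarith)
  · constructor
    · rintro ⟨s, hs⟩
      obtain ⟨C, hC, hbd⟩ := forward s hs
      exact ⟨(n : ℝ) - s, C, hC, hbd⟩
    · rintro ⟨N, C, hC, h⟩
      exact ⟨-N - (n:ℝ) - 1, hnorm_finite Φ u N C h _ (by push_cast; linarith)⟩
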